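/- For the regular paperfolding sequence (unfolding instructions all equal to 1), if n ≡ 1 (mod 4) then the ending position h(n) of the n-th maximal run satisfies h(n) = 2n. -/

import Mathlib

/-- Paperfolding word; instructions are given with the most recent (last) instruction first. -/
def foldAux : List ℤ → List ℤ
  | [] => []
  | a :: f => foldAux f ++ a :: (foldAux f).reverse.map (fun x => -x)

/-- `paper f` is the finite paperfolding word `P_f` for instructions `f = [f_0, f_1, …]`,
satisfying `P_ε = ε` and `P_{f·a} = P_f · a · (-P_f^R)`. -/
def paper (f : List ℤ) : List ℤ := foldAux f.reverse

/-- The sequence of lengths of the maximal runs (maximal blocks of equal symbols) of `w`. -/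
def runLengths (w : List ℤ) : List ℕ := (w.splitBy (fun a b => a == b)).map List.length

/-- `p` (indexed from 1) is the infinite paperfolding sequence with instructions `f`,
i.e. every finite paperfolding word of a prefix of `f` is a prefix of `p`. -/
def IsLimit (f : ℕ → ℤ) (p : ℕ → ℤ) : Prop :=
  ∀ m k, k < (paper ((List.range m).map f)).length →
    p (k + 1) = (paper ((List.range m).map f)).getD k 0

/-- `E` enumerates, in increasing order (`E 1 < E 2 < ⋯`, with the convention `E 0 = 0`),
the ending positions of the maximal runs of the sequence `p` (indexed from 1):
position `m ≥ 1` ends a run iff `p m ≠ p (m+1)`. -/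
def IsRunEnds (p : ℕ → ℤ) (E : ℕ → ℕ) : Prop :=
  E 0 = 0 ∧ StrictMono E ∧ ∀ m, 1 ≤ m → ((∃ n, 1 ≤ n ∧ E n = m) ↔ p m ≠ p (m + 1))

/-- Explicit description of the regular paperfolding sequence. -/
def q : ℕ → ℤ
  | 0 => 1
  | m+1 =>
    if (m+1) % 2 = 1 then (if (m+1) % 4 = 1 then 1 else -1)
    else q ((m+1)/2)
decreasing_by exact Nat.div_lt_self (Nat.succ_pos m) one_lt_two

lemma q_succ (m : ℕ) : q (m+1) =
    if (m+1) % 2 = 1 then (if (m+1) % 4 = 1 then 1 else -1) else q ((m+1)/2) := by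
  rw [q]

lemma q_mod1 {m : ℕ} (h : m % 4 = 1) : q m = 1 := by
  obtain ⟨k, rfl⟩ : ∃ k, m = k+1 := ⟨m-1, by omega⟩
  rw [q_succ]; rw [if_pos (by omega), if_pos h]

lemma q_mod3 {m : ℕ} (h : m % 4 = 3) : q m = -1 := by
  obtain ⟨k, rfl⟩ : ∃ k, m = k+1 := ⟨m-1, by omega⟩
  rw [q_succ]; rw [if_pos (by omega), if_neg (by omega)]

lemma q_even {m : ℕ} (h : m % 2 = 0) (h0 : 0 < m) : q m = q (m/2) := by
  obtain ⟨k, rfl⟩ : ∃ k, m = k+1 := ⟨m-1, by omega⟩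
  rw [q_succ, if_neg (by omega)]

lemma q_cases (m : ℕ) : q m = 1 ∨ q m = -1 := by
  induction m using Nat.strong_induction_on with
  | _ m ih =>
    match m with
    | 0 => left; rw [q]
    | m+1 =>
      rw [q_succ]
      split
      · split <;> simp
      · exact ih _ (by omega)

lemma q_pow2 (m : ℕ) : q (2^m) = 1 := by
  induction m with
  | zero => exact q_mod1 (by norm_num)
  | succ m ih =>
    rw [q_even (by simp [pow_succ, Nat.mul_mod]) (by positivity)]
    rw [pow_succ, Nat.mul_div_cancel _ (by norm_num)]
    exact ih

lemma q_antisym : ∀ m s, 2^m < s → s < 2^(m+1) → q s = - q (2^(m+1) - s) := by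
  intro m
  induction m with
  | zero => intro s h1 h2; omega
  | succ m ih =>
    intro s h1 h2
    have h4 : 2^(m+2) = 4 * 2^m := by ring
    have h4' : 2^(m+1) = 2 * 2^m := by ring
    rcases Nat.even_or_odd s with he | ho
    · have hs2 : s % 2 = 0 := Nat.even_iff.mp he
      rw [q_even hs2 (by omega), q_even (m := 2^(m+2) - s) (by omega) (by omega)]
      have : (2^(m+2) - s)/2 = 2^(m+1) - s/2 := by omega
      rw [this]
      exact ih (s/2) (by omega) (by omega)
    · have hs2 : s % 2 = 1 := Nat.odd_iff.mp ho
      rcases Nat.even_or_odd (s/2) with h | h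
      · have : s % 4 = 1 := by
          have := Nat.even_iff.mp h; omega
        rw [q_mod1 this, q_mod3 (by omega)]; ring
      · have : s % 4 = 3 := by
          have := Nat.odd_iff.mp h; omega
        rw [q_mod3 this, q_mod1 (by omega)]

lemma foldAux_len (m : ℕ) : (foldAux (List.replicate m 1)).length = 2^m - 1 := by
  induction m with
  | zero => rfl
  | succ m ih =>
    rw [List.replicate_succ]
    show (foldAux (List.replicate m 1) ++ _ :: _).length = _
    simp only [List.length_append, List.length_cons, List.length_map, List.length_reverse, ih]
    have : 1 ≤ 2^m := Nat.one_le_two_pow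
    rw [pow_succ]; omega

lemma foldAux_getElem : ∀ m k (h : k < (foldAux (List.replicate m 1)).length),
    (foldAux (List.replicate m 1))[k] = q (k+1) := by
  intro m
  induction m with
  | zero => intro k h; simp [foldAux] at h
  | succ m ih =>
    intro k h
    have hlen : (foldAux (List.replicate m 1)).length = 2^m - 1 := foldAux_len m
    have h1 : 1 ≤ 2^m := Nat.one_le_two_pow
    have hlen' := foldAux_len (m+1)
    have heq : foldAux (List.replicate (m+1) 1) = foldAux (List.replicate m 1) ++ (1:ℤ) :: (foldAux (List.replicate m 1)).reverse.map (fun x => -x) := by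
      rw [List.replicate_succ]
      rfl
    simp only [heq] at h ⊢
    rcases lt_trichotomy k (2^m - 1) with hk | hk | hk
    · rw [List.getElem_append_left (by omega)]
      exact ih k (by omega)
    · rw [List.getElem_append_right (by omega)]
      have : k - (foldAux (List.replicate m 1)).length = 0 := by omega
      simp only [this, List.getElem_cons_zero]
      subst hk
      have : 2^m - 1 + 1 = 2^m := by omega
      rw [this, q_pow2]
    · have hk2 : k < 2^(m+1) - 1 := by
        simp only [List.length_append, List.length_cons, List.length_map,
          List.length_reverse, hlen] at h
        rw [pow_succ]; omega
      rw [List.getElem_append_right (by omega)]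
      have hpos : 0 < k - (foldAux (List.replicate m 1)).length := by omega
      rw [List.getElem_cons]
      rw [dif_neg (by omega)]
      rw [List.getElem_map, List.getElem_reverse]
      rw [ih _ (by omega)]
      have harg : (foldAux (List.replicate m 1)).length - 1 - (k - (foldAux (List.replicate m 1)).length - 1) + 1
          = 2^(m+1) - 1 - k := by rw [hlen]; rw [pow_succ] at hk2 ⊢; omega
      rw [harg]
      have := q_antisym m (k+1) (by omega) (by rw [pow_succ] at hk2 ⊢; omega)
      rw [this]
      have h2 : 2^(m+1) - (k+1) = 2^(m+1) - 1 - k := by omega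
      rw [h2]

lemma p_eq_q {p : ℕ → ℤ} (hp : IsLimit (fun _ => 1) p) : ∀ m, 1 ≤ m → p m = q m := by
  intro m hm
  obtain ⟨k, rfl⟩ : ∃ k, m = k+1 := ⟨m-1, by omega⟩
  have hrep : (List.range (k+1)).map (fun _ => (1:ℤ)) = List.replicate (k+1) 1 := by
    simp [List.map_const']
  have hpap : paper ((List.range (k+1)).map (fun _ => (1:ℤ))) = foldAux (List.replicate (k+1) 1) := by
    rw [hrep, paper, List.reverse_replicate]
  have hklen : k < (foldAux (List.replicate (k+1) 1)).length := by
    rw [foldAux_len]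
    have : k + 1 < 2^(k+1) := Nat.lt_two_pow_self
    omega
  have := hp (k+1) k (by rw [hpap]; exact hklen)
  rw [hpap, List.getD_eq_getElem _ _ hklen, foldAux_getElem _ _ hklen] at this
  exact this

/- value lemmas mod 8 -/
lemma qv2 (j : ℕ) : q (8*j+2) = 1 := by
  rw [q_even (by omega) (by omega), show (8*j+2)/2 = 4*j+1 by omega, q_mod1 (by omega)]
lemma qv3 (j : ℕ) : q (8*j+3) = -1 := q_mod3 (by omega)
lemma qv4 (j : ℕ) : q (8*j+4) = q (2*j+1) := by
  rw [q_even (by omega) (by omega), show (8*j+4)/2 = 4*j+2 by omega,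
    q_even (by omega) (by omega), show (4*j+2)/2 = 2*j+1 by omega]
lemma qv5 (j : ℕ) : q (8*j+5) = 1 := q_mod1 (by omega)
lemma qv6 (j : ℕ) : q (8*j+6) = -1 := by
  rw [q_even (by omega) (by omega), show (8*j+6)/2 = 4*j+3 by omega, q_mod3 (by omega)]
lemma qv7 (j : ℕ) : q (8*j+7) = -1 := q_mod3 (by omega)
lemma qv8 (j : ℕ) : q (8*j+8) = q (j+1) := by
  rw [q_even (by omega) (by omega), show (8*j+8)/2 = 4*j+4 by omega,
    q_even (by omega) (by omega), show (4*j+4)/2 = 2*j+2 by omega,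
    q_even (by omega) (by omega), show (2*j+2)/2 = j+1 by omega]
lemma qv9 (j : ℕ) : q (8*j+9) = 1 := q_mod1 (by omega)
lemma qv10 (j : ℕ) : q (8*j+10) = 1 := by
  rw [q_even (by omega) (by omega), show (8*j+10)/2 = 4*j+5 by omega, q_mod1 (by omega)]
lemma qv11 (j : ℕ) : q (8*j+11) = -1 := q_mod3 (by omega)
lemma q_odd_even {j : ℕ} (h : j % 2 = 0) : q (2*j+1) = 1 := q_mod1 (by omega)
lemma q_odd_odd {j : ℕ} (h : j % 2 = 1) : q (2*j+1) = -1 := q_mod3 (by omega)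

theorem regular_runEnd_one_mod_four (p : ℕ → ℤ) (E : ℕ → ℕ)
    (hp : IsLimit (fun _ => 1) p) (hE : IsRunEnds p E) :
    ∀ n, n % 4 = 1 → E n = 2 * n := by
  obtain ⟨hE0, hmono, hmem⟩ := hE
  have hpq := p_eq_q hp
  have hmem' : ∀ m, 1 ≤ m → ((∃ k, 1 ≤ k ∧ E k = m) ↔ q m ≠ q (m+1)) := by
    intro m hm
    rw [hmem m hm, hpq m hm, hpq (m+1) (by omega)]
  have next : ∀ (k a b : ℕ), E k = a → a < b → q b ≠ q (b+1) →
      (∀ m, a < m → m < b → q m = q (m+1)) → E (k+1) = b := by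
    intro k a b hk hab hb hgap
    obtain ⟨t, ht1, ht2⟩ := (hmem' b (by omega)).mpr hb
    have hkt : k < t := hmono.lt_iff_lt.mp (by omega)
    have hle : E (k+1) ≤ b := ht2 ▸ hmono.monotone (by omega : k+1 ≤ t)
    have hgt : a < E (k+1) := hk ▸ hmono (Nat.lt_succ_self k)
    rcases eq_or_lt_of_le hle with h | h
    · exact h
    · exact absurd (hgap _ hgt h) ((hmem' (E (k+1)) (by omega)).mp ⟨k+1, by omega, rfl⟩)
  have key : ∀ j, E (4*j+1) = 8*j+2 := by
    intro j
    induction j with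
    | zero =>
      show E (0+1) = _
      refine next 0 0 2 hE0 (by omega) ?_ ?_
      · rw [show (2:ℕ) = 8*0+2 by omega, show 8*0+2+1 = 8*0+3 by omega, qv2, qv3]; norm_num
      · intro m h1 h2
        rw [show m = 1 by omega, q_mod1 (by omega), show (1:ℕ)+1 = 8*0+2 by omega, qv2]
    | succ j ih =>
      rw [show 4*(j+1)+1 = (4*j+1)+1+1+1+1 by omega, show 8*(j+1)+2 = 8*j+10 by omega]
      rcases Nat.mod_two_eq_zero_or_one j with hj | hj
      all_goals rcases q_cases (j+1) with he | he
      -- j even, q(j+1)=1 : chain 8j+3, 8j+5, 8j+7, 8j+10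
      · have s1 : E ((4*j+1)+1) = 8*j+3 := by
          refine next _ _ _ ih (by omega) ?_ ?_
          · rw [show 8*j+3+1 = 8*j+4 by omega, qv3, qv4, q_odd_even hj]; norm_num
          · intro m h1 h2; omega
        have s2 : E ((4*j+1)+1+1) = 8*j+5 := by
          refine next _ _ _ s1 (by omega) ?_ ?_
          · rw [show 8*j+5+1 = 8*j+6 by omega, qv5, qv6]; norm_num
          · intro m h1 h2
            rw [show m = 8*j+4 by omega, qv4, q_odd_even hj,
              show 8*j+4+1 = 8*j+5 by omega, qv5]
        have s3 : E ((4*j+1)+1+1+1) = 8*j+7 := by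
          refine next _ _ _ s2 (by omega) ?_ ?_
          · rw [show 8*j+7+1 = 8*j+8 by omega, qv7, qv8, he]; norm_num
          · intro m h1 h2
            rw [show m = 8*j+6 by omega, qv6, show 8*j+6+1 = 8*j+7 by omega, qv7]
        refine next _ _ _ s3 (by omega) ?_ ?_
        · rw [show 8*j+10+1 = 8*j+11 by omega, qv10, qv11]; norm_num
        · intro m h1 h2
          rcases (show m = 8*j+8 ∨ m = 8*j+9 by omega) with rfl | rfl
          · rw [qv8, he, show 8*j+8+1 = 8*j+9 by omega, qv9]
          · rw [qv9, show 8*j+9+1 = 8*j+10 by omega, qv10]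
      -- j even, q(j+1)=-1 : chain 8j+3, 8j+5, 8j+8, 8j+10
      · have s1 : E ((4*j+1)+1) = 8*j+3 := by
          refine next _ _ _ ih (by omega) ?_ ?_
          · rw [show 8*j+3+1 = 8*j+4 by omega, qv3, qv4, q_odd_even hj]; norm_num
          · intro m h1 h2; omega
        have s2 : E ((4*j+1)+1+1) = 8*j+5 := by
          refine next _ _ _ s1 (by omega) ?_ ?_
          · rw [show 8*j+5+1 = 8*j+6 by omega, qv5, qv6]; norm_num
          · intro m h1 h2
            rw [show m = 8*j+4 by omega, qv4, q_odd_even hj,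
              show 8*j+4+1 = 8*j+5 by omega, qv5]
        have s3 : E ((4*j+1)+1+1+1) = 8*j+8 := by
          refine next _ _ _ s2 (by omega) ?_ ?_
          · rw [show 8*j+8+1 = 8*j+9 by omega, qv8, he, qv9]; norm_num
          · intro m h1 h2
            rcases (show m = 8*j+6 ∨ m = 8*j+7 by omega) with rfl | rfl
            · rw [qv6, show 8*j+6+1 = 8*j+7 by omega, qv7]
            · rw [qv7, show 8*j+7+1 = 8*j+8 by omega, qv8, he]
        refine next _ _ _ s3 (by omega) ?_ ?_
        · rw [show 8*j+10+1 = 8*j+11 by omega, qv10, qv11]; norm_num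
        · intro m h1 h2
          rw [show m = 8*j+9 by omega, qv9, show 8*j+9+1 = 8*j+10 by omega, qv10]
      -- j odd, q(j+1)=1 : chain 8j+4, 8j+5, 8j+7, 8j+10
      · have s1 : E ((4*j+1)+1) = 8*j+4 := by
          refine next _ _ _ ih (by omega) ?_ ?_
          · rw [show 8*j+4+1 = 8*j+5 by omega, qv4, q_odd_odd hj, qv5]; norm_num
          · intro m h1 h2
            rw [show m = 8*j+3 by omega, qv3, show 8*j+3+1 = 8*j+4 by omega, qv4,
              q_odd_odd hj]
        have s2 : E ((4*j+1)+1+1) = 8*j+5 := by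
          refine next _ _ _ s1 (by omega) ?_ ?_
          · rw [show 8*j+5+1 = 8*j+6 by omega, qv5, qv6]; norm_num
          · intro m h1 h2; omega
        have s3 : E ((4*j+1)+1+1+1) = 8*j+7 := by
          refine next _ _ _ s2 (by omega) ?_ ?_
          · rw [show 8*j+7+1 = 8*j+8 by omega, qv7, qv8, he]; norm_num
          · intro m h1 h2
            rw [show m = 8*j+6 by omega, qv6, show 8*j+6+1 = 8*j+7 by omega, qv7]
        refine next _ _ _ s3 (by omega) ?_ ?_
        · rw [show 8*j+10+1 = 8*j+11 by omega, qv10, qv11]; norm_num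
        · intro m h1 h2
          rcases (show m = 8*j+8 ∨ m = 8*j+9 by omega) with rfl | rfl
          · rw [qv8, he, show 8*j+8+1 = 8*j+9 by omega, qv9]
          · rw [qv9, show 8*j+9+1 = 8*j+10 by omega, qv10]
      -- j odd, q(j+1)=-1 : chain 8j+4, 8j+5, 8j+8, 8j+10
      · have s1 : E ((4*j+1)+1) = 8*j+4 := by
          refine next _ _ _ ih (by omega) ?_ ?_
          · rw [show 8*j+4+1 = 8*j+5 by omega, qv4, q_odd_odd hj, qv5]; norm_num
          · intro m h1 h2
            rw [show m = 8*j+3 by omega, qv3, show 8*j+3+1 = 8*j+4 by omega, qv4,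
              q_odd_odd hj]
        have s2 : E ((4*j+1)+1+1) = 8*j+5 := by
          refine next _ _ _ s1 (by omega) ?_ ?_
          · rw [show 8*j+5+1 = 8*j+6 by omega, qv5, qv6]; norm_num
          · intro m h1 h2; omega
        have s3 : E ((4*j+1)+1+1+1) = 8*j+8 := by
          refine next _ _ _ s2 (by omega) ?_ ?_
          · rw [show 8*j+8+1 = 8*j+9 by omega, qv8, he, qv9]; norm_num
          · intro m h1 h2
            rcases (show m = 8*j+6 ∨ m = 8*j+7 by omega) with rfl | rfl
            · rw [qv6, show 8*j+6+1 = 8*j+7 by omega, qv7]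
            · rw [qv7, show 8*j+7+1 = 8*j+8 by omega, qv8, he]
        refine next _ _ _ s3 (by omega) ?_ ?_
        · rw [show 8*j+10+1 = 8*j+11 by omega, qv10, qv11]; norm_num
        · intro m h1 h2
          rw [show m = 8*j+9 by omega, qv9, show 8*j+9+1 = 8*j+10 by omega, qv10]
  intro n hn
  obtain ⟨j, rfl⟩ : ∃ j, n = 4*j+1 := ⟨n/4, by omega⟩
  rw [key j]; omega
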